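/- Let m ≥ 1, t ∈ ℝ, ξ ∈ 𝕊^{2m+1}, and let φ(z) = |cosh t + sinh t (z·ξ̄)|² on 𝕊^{2m+1}. Then for every z ∈ 𝕊^{2m+1}: 1/2 + (1/2)φ(z) + φ(z)^{−1}|∂φ|²(z) + i·Tφ(z) = cosh t · (cosh t + sinh t · conj(z·ξ̄)). In particular the quantity g = 1/2 + φ/2 + φ^{−1}|∂φ|² + iφ_0 factors as cosh t (cosh t + sinh t conj(z·ξ̄)). -/

import Mathlib

noncomputable section

/-- The hermitian pairing `z·ξ̄ = Σ_j z_j conj(ξ_j)` on `ℂ^{m+1}`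
(note Mathlib's `inner` is conjugate-linear in the first slot). -/
def hprod {m : ℕ} (z ξ : EuclideanSpace ℂ (Fin (m+1))) : ℂ := inner ℂ ξ z

/-- The degree-zero homogeneous extension of a function on the unit sphere
`𝕊^{2m+1} ⊂ ℂ^{m+1}`: `F̃(y) = F(y/‖y‖)`. -/
def sphExtC {m : ℕ} (F : EuclideanSpace ℂ (Fin (m+1)) → ℝ)
    (y : EuclideanSpace ℂ (Fin (m+1))) : ℝ :=
  F (‖y‖⁻¹ • y)

/-- Second directional derivative of `F` at `x` in direction `v`. -/
def dir2 {V : Type*} [NormedAddCommGroup V] [NormedSpace ℝ V]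
    (F : V → ℝ) (x v : V) : ℝ :=
  fderiv ℝ (fun y => fderiv ℝ F y v) x v

/-- The Euclidean Laplacian on `ℂ^{m+1} ≅ ℝ^{2m+2}`, computed in the real orthonormal
basis `{e_j, i·e_j}`. -/
def lapC {m : ℕ} (F : EuclideanSpace ℂ (Fin (m+1)) → ℝ)
    (z : EuclideanSpace ℂ (Fin (m+1))) : ℝ :=
  ∑ j : Fin (m+1),
    (dir2 F z (EuclideanSpace.single j 1) + dir2 F z (EuclideanSpace.single j Complex.I))

/-- The Reeb derivative `TF(z) = d/ds|_{s=0} F(e^{is/2} z)` for the canonical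
pseudohermitian structure on `𝕊^{2m+1}`. -/
def reeb {m : ℕ} (F : EuclideanSpace ℂ (Fin (m+1)) → ℝ)
    (z : EuclideanSpace ℂ (Fin (m+1))) : ℝ :=
  deriv (fun s : ℝ => F (Complex.exp (Complex.I * s / 2) • z)) 0

/-- The CR sub-Laplacian of `(𝕊^{2m+1}, θ_c)`:
`Δ_b F(z) = (1/4) Δ_{ℝ^{2m+2}} F̃(z) − T(TF)(z)`. -/
def subLapC {m : ℕ} (F : EuclideanSpace ℂ (Fin (m+1)) → ℝ)
    (z : EuclideanSpace ℂ (Fin (m+1))) : ℝ :=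
  (1 / 4) * lapC (sphExtC F) z - reeb (reeb (sphExtC F)) z

/-- Orthogonal projection onto the holomorphic tangent (horizontal) space
`H_z = {w : Σ_j w_j conj(z_j) = 0}` at a point `z` of the unit sphere. -/
def projH {m : ℕ} (z w : EuclideanSpace ℂ (Fin (m+1))) : EuclideanSpace ℂ (Fin (m+1)) :=
  w - (inner ℂ z w : ℂ) • z

/-- `|∂F|²(z) = (1/8)|P_{H_z}(∇F̃(z))|²`, the squared norm of `∂_b F` with respect to the
canonical pseudohermitian structure `θ_c`. -/
def delbSq {m : ℕ} (F : EuclideanSpace ℂ (Fin (m+1)) → ℝ)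
    (z : EuclideanSpace ℂ (Fin (m+1))) : ℝ :=
  (1 / 8) * ‖projH z (gradient (sphExtC F) z)‖ ^ 2

/-! ### Auxiliary lemmas -/

local notation "E" m => EuclideanSpace ℂ (Fin (m+1))

lemma aux_smul_coe {m : ℕ} (r : ℝ) (x : E m) : r • x = ((r : ℂ)) • x := by
  rw [← smul_one_smul ℂ r x]; norm_num

lemma aux_re_inner {m : ℕ} (x y : E m) : (inner ℝ x y : ℝ) = (inner ℂ x y : ℂ).re := by
  simp [PiLp.inner_apply, RCLike.inner_apply, Complex.re_sum]

lemma aux_reC (x u : ℂ) : (inner ℝ x u : ℝ) = ((starRingEnd ℂ) x * u).re := by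
  rw [Complex.inner, mul_comm]

/-- gradient of the homogeneous extension of `φ` at a point of the sphere -/
lemma aux_grad {m : ℕ} (c sh : ℝ) (ξ z : E m) (hz : ‖z‖ = 1) :
    HasGradientAt
      (fun y : E m => c^2 + (2*c*sh*(‖y‖⁻¹ * (inner ℂ ξ y : ℂ).re)
          + sh^2*((‖y‖⁻¹ * ‖y‖⁻¹) * ‖(inner ℂ ξ y : ℂ)‖^2)))
      ((2*sh) • ((((c:ℂ) + (sh:ℂ) * (inner ℂ ξ z : ℂ)) • ξ)
        - (((starRingEnd ℂ) ((c:ℂ) + (sh:ℂ) * (inner ℂ ξ z : ℂ)) * (inner ℂ ξ z : ℂ)).re) • z))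
      z := by
  have hz0 : ‖z‖ ≠ 0 := by rw [hz]; norm_num
  have hn2 : HasFDerivAt (fun y : E m => ‖y‖^2) (2 • innerSL ℝ z) z :=
    (hasStrictFDerivAt_norm_sq z).hasFDerivAt
  have hsq : ((‖z‖:ℝ)^2) ≠ 0 := by rw [hz]; norm_num
  have hn : HasFDerivAt (fun y : E m => ‖y‖) (innerSL ℝ z) z := by
    have h := (Real.hasDerivAt_sqrt hsq).comp_hasFDerivAt z hn2
    rw [show ((fun x => Real.sqrt x) ∘ fun y : E m => ‖y‖^2) = fun y : E m => ‖y‖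
          from funext fun y => Real.sqrt_sq (norm_nonneg y)] at h
    refine h.congr_fderiv ?_
    symm
    rw [hz]
    ext v
    simp [smul_smul]
  have hninv : HasFDerivAt (fun y : E m => ‖y‖⁻¹) ((-(‖z‖^2)⁻¹ : ℝ) • innerSL ℝ z) z :=
    (hasDerivAt_inv hz0).comp_hasFDerivAt z hn
  have hL1 : HasFDerivAt (fun y : E m => (inner ℂ ξ y : ℂ).re)
      ((Complex.reCLM).comp ((innerSL ℂ ξ).restrictScalars ℝ)) z :=
    ((Complex.reCLM).comp ((innerSL ℂ ξ).restrictScalars ℝ)).hasFDerivAt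
  have hW : HasFDerivAt (fun y : E m => (inner ℂ ξ y : ℂ))
      ((innerSL ℂ ξ).restrictScalars ℝ) z :=
    ((innerSL ℂ ξ).restrictScalars ℝ).hasFDerivAt
  have hnsqW : HasFDerivAt (fun y : E m => ‖(inner ℂ ξ y : ℂ)‖^2)
      (2 • (innerSL ℝ ((inner ℂ ξ z : ℂ))).comp ((innerSL ℂ ξ).restrictScalars ℝ)) z :=
    hW.norm_sq
  have hA := hninv.mul hL1
  have hB := (hninv.mul hninv).mul hnsqW
  have hg := ((hA.const_mul (2*c*sh)).add (hB.const_mul (sh^2))).const_add (c^2)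
  rw [hasGradientAt_iff_hasFDerivAt]
  refine hg.congr_fderiv ?_
  symm
  apply ContinuousLinearMap.ext
  intro v
  rw [InnerProductSpace.toDual_apply_apply]
  simp only [ContinuousLinearMap.add_apply, ContinuousLinearMap.smul_apply,
    ContinuousLinearMap.comp_apply, ContinuousLinearMap.coe_smul', Pi.smul_apply, Pi.mul_apply,
    ContinuousLinearMap.coe_restrictScalars', innerSL_apply_apply, Complex.reCLM_apply,
    smul_eq_mul, hz]
  rw [aux_re_inner, aux_reC, aux_re_inner]
  rw [aux_smul_coe, inner_smul_left, inner_sub_left, inner_smul_left,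
    aux_smul_coe, inner_smul_left]
  simp only [Complex.sq_norm, Complex.normSq_apply, nsmul_eq_mul,
    Complex.mul_re, Complex.mul_im, Complex.conj_re, Complex.conj_im, Complex.ofReal_re,
    Complex.ofReal_im, Complex.sub_re, Complex.sub_im, Complex.add_re, Complex.add_im,
    Nat.cast_ofNat, mul_zero, zero_mul, sub_zero, zero_sub, neg_neg, mul_one, one_mul]
  ring

/-- for `m ≥ 1`, `t ∈ ℝ`, `ξ ∈ 𝕊^{2m+1}` and
`φ(z) = |cosh t + sinh t (z·ξ̄)|²`, one has, at every `z ∈ 𝕊^{2m+1}`, the factorization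
`1/2 + φ/2 + φ⁻¹|∂φ|² + i φ_0 = cosh t (cosh t + sinh t conj(z·ξ̄))` of the quantity `g`. -/
theorem stmt14 (m : ℕ) (hm : 1 ≤ m) (t : ℝ)
    (ξ : EuclideanSpace ℂ (Fin (m+1))) (hξ : ‖ξ‖ = 1)
    (φ : EuclideanSpace ℂ (Fin (m+1)) → ℝ)
    (hφ : ∀ z, φ z = ‖(Real.cosh t : ℂ) + (Real.sinh t : ℂ) * hprod z ξ‖ ^ 2) :
    ∀ z : EuclideanSpace ℂ (Fin (m+1)), ‖z‖ = 1 →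
      ((1 / 2 + φ z / 2 + (φ z)⁻¹ * delbSq φ z : ℝ) : ℂ) + Complex.I * (reeb φ z : ℝ)
        = (Real.cosh t : ℂ) *
            ((Real.cosh t : ℂ) + (Real.sinh t : ℂ) * (starRingEnd ℂ) (hprod z ξ)) := by
  intro z hz
  set c := Real.cosh t with hc
  set sh := Real.sinh t with hsh
  set w : ℂ := inner ℂ ξ z with hw
  set a : ℂ := (c:ℂ) + (sh:ℂ) * w with ha
  have hφ' : ∀ u, φ u = ‖(c:ℂ) + (sh:ℂ) * (inner ℂ ξ u : ℂ)‖ ^ 2 := by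
    intro u; rw [hφ]; rfl
  -- `a ≠ 0`
  have hw1 : ‖w‖ ≤ 1 := by
    have := norm_inner_le_norm (𝕜 := ℂ) ξ z
    rw [hξ, hz] at this; simpa using this
  have hshc : |sh| < c := by
    have h1 := Real.cosh_sq t
    have h2 := Real.cosh_pos t
    nlinarith [sq_abs sh, abs_nonneg sh]
  have ha0 : a ≠ 0 := by
    intro h0
    have hca : (c:ℂ) = -((sh:ℂ) * w) := by rw [ha] at h0; linear_combination h0
    have : ‖((c:ℂ))‖ = ‖((sh:ℂ))‖ * ‖w‖ := by
      rw [hca]; simp [map_mul]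
    rw [Complex.norm_real, Complex.norm_real, Real.norm_eq_abs, Real.norm_eq_abs] at this
    have hc0 : 0 < c := Real.cosh_pos t
    have : c ≤ |sh| := by
      rw [abs_of_pos hc0] at this
      calc c = |sh| * ‖w‖ := this
        _ ≤ |sh| * 1 := by
            exact mul_le_mul_of_nonneg_left hw1 (abs_nonneg sh)
        _ = |sh| := mul_one _
    linarith
  have hnsq0 : Complex.normSq a ≠ 0 := by
    simpa [Complex.normSq_eq_zero] using ha0
  -- Reeb derivative
  have hreeb : reeb φ z = -(c * sh * w.im) := by
    unfold reeb
    have hfun : (fun s : ℝ => φ (Complex.exp (Complex.I * s / 2) • z))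
        = fun s : ℝ => ‖(c:ℂ) + (sh:ℂ) * (Complex.exp (Complex.I * s / 2) * w)‖ ^ 2 := by
      funext s
      rw [hφ', inner_smul_right, ← hw]
    rw [hfun]
    have h1 : HasDerivAt (fun s : ℝ => Complex.I * (s:ℂ) / 2) (Complex.I / 2) 0 := by
      simpa using ((Complex.ofRealCLM.hasDerivAt (x := (0:ℝ))).const_mul Complex.I).div_const 2
    have h4 := ((((h1.cexp).mul_const w).const_mul ((sh:ℂ))).const_add ((c:ℂ))).norm_sq
    rw [h4.deriv]
    show (2 : ℝ) * _ = _
    rw [aux_reC]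
    simp [Complex.mul_re, Complex.mul_im]
    ring
  -- the homogeneous extension agrees with an explicit smooth function
  have hsph : sphExtC φ = fun y : EuclideanSpace ℂ (Fin (m+1)) =>
      c^2 + (2*c*sh*(‖y‖⁻¹ * (inner ℂ ξ y : ℂ).re)
        + sh^2*((‖y‖⁻¹ * ‖y‖⁻¹) * ‖(inner ℂ ξ y : ℂ)‖^2)) := by
    funext y
    unfold sphExtC
    rw [hφ', aux_smul_coe, inner_smul_right]
    simp only [Complex.sq_norm, Complex.normSq_apply,
      Complex.add_re, Complex.add_im, Complex.mul_re, Complex.mul_im,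
      Complex.ofReal_re, Complex.ofReal_im]
    ring
  -- gradient value
  have hgrad : gradient (sphExtC φ) z
      = (2*sh) • ((a • ξ) - (((starRingEnd ℂ) a * w).re) • z) := by
    rw [hsph]
    exact (aux_grad c sh ξ z hz).gradient
  -- horizontal projection
  have hproj : projH z (gradient (sphExtC φ) z)
      = (2*sh) • (a • (ξ - ((starRingEnd ℂ) w) • z)) := by
    rw [hgrad]
    unfold projH
    have hzz : (inner ℂ z z : ℂ) = 1 := by
      rw [inner_self_eq_norm_sq_to_K, hz]; norm_num
    have hzξ : (inner ℂ z ξ : ℂ) = (starRingEnd ℂ) w := by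
      rw [hw, ← inner_conj_symm]
    rw [aux_smul_coe, inner_smul_right, inner_sub_right, inner_smul_right,
      aux_smul_coe, inner_smul_right, hzz, hzξ, aux_smul_coe]
    module
  -- norm of the horizontal projection
  have hu : ‖ξ - ((starRingEnd ℂ) w) • z‖^2 = 1 - Complex.normSq w := by
    rw [norm_sub_sq_real]
    rw [aux_re_inner, inner_smul_right, ← hw, hξ, norm_smul, RCLike.norm_conj, hz]
    simp only [Complex.sq_norm, mul_one, one_pow]
    have : ((starRingEnd ℂ) w * w).re = Complex.normSq w := by
      simp [Complex.normSq_apply, Complex.mul_re]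
    rw [this]; ring
  have hnorm : ‖projH z (gradient (sphExtC φ) z)‖^2
      = (2*sh)^2 * (Complex.normSq a * (1 - Complex.normSq w)) := by
    rw [hproj, norm_smul, norm_smul, mul_pow, mul_pow, hu,
      Real.norm_eq_abs, sq_abs, Complex.sq_norm]
    try ring
  have hφz : φ z = Complex.normSq a := by
    rw [hφ' z]
    simp only [Complex.sq_norm]
    try rfl
  have hq : (φ z)⁻¹ * delbSq φ z = sh^2 * (1 - Complex.normSq w) / 2 := by
    unfold delbSq
    rw [hnorm, hφz]
    field_simp
    ring
  have hpr : hprod z ξ = w := rfl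
  rw [hq, hreeb, hφz, hpr]
  have hcs : c^2 - sh^2 = 1 := Real.cosh_sq_sub_sinh_sq t
  apply Complex.ext
  · simp only [Complex.add_re, Complex.ofReal_re, Complex.mul_re, Complex.I_re,
      Complex.I_im, Complex.ofReal_im, Complex.add_im, Complex.mul_im,
      Complex.conj_re, Complex.conj_im, ha, Complex.normSq_apply]
    ring_nf
    nlinarith [hcs]
  · simp only [Complex.add_im, Complex.ofReal_im, Complex.mul_im, Complex.I_re,
      Complex.I_im, Complex.ofReal_re, Complex.add_re, Complex.mul_re,
      Complex.conj_re, Complex.conj_im]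
    ring
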